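/- Suppose Γ_{ab}Γ_{ba} > 1 for all a ≠ b. Define P by (PG)_{ab} = (Γ_{ba} G_{ab} − G_{ba})/(Γ_{ab}Γ_{ba} − 1) for a ≠ b and (PG)_{aa} = 0. Then P is the Moore–Penrose pseudoinverse of H̃: H̃ P H̃ = H̃, P H̃ P = P, and both H̃P and PH̃ are self-adjoint with respect to the Frobenius inner product. -/

import Mathlib

open Matrix

theorem stmt10 {p : ℕ} (Γ : Fin p → Fin p → ℝ)
    (hΓpos : ∀ a b, 0 < Γ a b) (hΓdiag : ∀ a, Γ a a = 1)
    (hΓ : ∀ a b, a ≠ b → 1 < Γ a b * Γ b a)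
    (Ht P : Matrix (Fin p) (Fin p) ℝ → Matrix (Fin p) (Fin p) ℝ)
    (hHt : ∀ M a b, Ht M a b = if a = b then 0 else Γ a b * M a b + M b a)
    (hP : ∀ G a b, P G a b =
      if a = b then 0 else (Γ b a * G a b - G b a) / (Γ a b * Γ b a - 1)) :
    (∀ M, Ht (P (Ht M)) = Ht M) ∧ (∀ M, P (Ht (P M)) = P M) ∧
    (∀ M N : Matrix (Fin p) (Fin p) ℝ,
      ∑ a, ∑ b, Ht (P M) a b * N a b = ∑ a, ∑ b, M a b * Ht (P N) a b) ∧
    (∀ M N : Matrix (Fin p) (Fin p) ℝ,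
      ∑ a, ∑ b, P (Ht M) a b * N a b = ∑ a, ∑ b, M a b * P (Ht N) a b) := by
  have hΔ : ∀ a b : Fin p, a ≠ b → Γ a b * Γ b a - 1 ≠ 0 := by
    intro a b h
    have := hΓ a b h
    linarith
  have hHtP : ∀ M a b, Ht (P M) a b = if a = b then 0 else M a b := by
    intro M a b
    rw [hHt, hP, hP]
    by_cases h : a = b
    · simp [h]
    · have h' : b ≠ a := fun hh => h hh.symm
      simp only [h, h', if_neg, if_false]
      have hΔ1 := hΔ a b h
      rw [mul_comm (Γ b a) (Γ a b)] at *
      field_simp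
      ring
  have hPHt : ∀ M a b, P (Ht M) a b = if a = b then 0 else M a b := by
    intro M a b
    rw [hP, hHt, hHt]
    by_cases h : a = b
    · simp [h]
    · have h' : b ≠ a := fun hh => h hh.symm
      simp only [h, h', if_neg, if_false]
      have hΔ1 := hΔ a b h
      field_simp
      have h2 : (-1 + Γ b a * Γ a b) ≠ 0 := fun hh => hΔ1 (by linarith)
      have h3 : (-1 + Γ b a * Γ a b) * (-1 + Γ b a * Γ a b)⁻¹ = 1 := mul_inv_cancel₀ h2
      linear_combination (M a b) * h3
  refine ⟨?_, ?_, ?_, ?_⟩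
  · intro M
    funext a b
    rw [hHtP]
    by_cases h : a = b
    · simp [h, hHt]
    · simp [h]
  · intro M
    funext a b
    rw [hPHt]
    by_cases h : a = b
    · simp [h, hP]
    · simp [h]
  · intro M N
    have : ∀ a b : Fin p, Ht (P M) a b * N a b = M a b * Ht (P N) a b := by
      intro a b
      rw [hHtP, hHtP]
      by_cases h : a = b <;> simp [h] <;> ring
    simp_rw [this]
  · intro M N
    have : ∀ a b : Fin p, P (Ht M) a b * N a b = M a b * P (Ht N) a b := by
      intro a b
      rw [hPHt, hPHt]
      by_cases h : a = b <;> simp [h] <;> ring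
    simp_rw [this]
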